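/- Let y₁, …, y_n be i.i.d. samples from a continuous distribution on ℝ with density f, where n = H·c. Define S₁ = (−∞, y_{(c)}], S_h = (y_{((h−1)c)}, y_{(hc)}] for 2 ≤ h ≤ H − 1, S_H = (y_{((H−1)c)}, ∞), and δ_h = ∫_{S_h} f(y) dy. Then there exists an absolute constant C > 0 such that for any ε > 4/(Hc − 1) and sufficiently large H and c, P(∃ h with |δ_h − 1/H| > ε) ≤ C·H²·√(Hc + 1)·exp(−(Hc + 1)·ε²/32). -/

import Mathlib

open MeasureTheory ProbabilityTheory

/-- The `k`-th order statistic (1-indexed) of a finite sample `v : Fin n → ℝ`: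
the `k`-th smallest value. -/
noncomputable def orderStat {n : ℕ} (v : Fin n → ℝ) (k : ℕ) : ℝ :=
  ((List.ofFn v).insertionSort (· ≤ ·)).getD (k - 1) 0

/-- The `h`-th slice (1-indexed, `1 ≤ h ≤ H`) determined by the order statistics
of the sample `v` of size `H * c`: `S₁ = (-∞, v_{(c)}]`,
`S_h = (v_{((h-1)c)}, v_{(hc)}]` for `2 ≤ h ≤ H - 1`, and `S_H = (v_{((H-1)c)}, ∞)`. -/
noncomputable def sirSlice (H c : ℕ) (v : Fin (H * c) → ℝ) (h : ℕ) : Set ℝ :=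
  if h = 1 then Set.Iic (orderStat v c)
  else if h = H then Set.Ioi (orderStat v ((H - 1) * c))
  else Set.Ioc (orderStat v ((h - 1) * c)) (orderStat v (h * c))

open Real

lemma countP_ofFn_eq_sum {n : ℕ} (v : Fin n → ℝ) (p : ℝ → Bool) :
    (List.ofFn v).countP p = ∑ i, if p (v i) then 1 else 0 := by
  induction n with
  | zero => simp
  | succ m ih =>
    rw [List.ofFn_succ, List.countP_cons, Fin.sum_univ_succ, ih]
    by_cases h : p (v 0) <;> simp [h] <;> omega

lemma sum_ite_eq_countP {n : ℕ} (v : Fin n → ℝ) (t : ℝ) :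
    ∑ i, (if v i ≤ t then (1:ℝ) else 0)
      = ((List.ofFn v).countP (fun x => decide (x ≤ t)) : ℝ) := by
  rw [countP_ofFn_eq_sum]
  push_cast
  refine Finset.sum_congr rfl fun i _ => ?_
  by_cases h : v i ≤ t <;> simp [h]

lemma sorted_getD_le_iff {l : List ℝ} (hs : l.Pairwise (· ≤ ·)) {k : ℕ}
    (hk1 : 1 ≤ k) (hk2 : k ≤ l.length) (t : ℝ) :
    l.getD (k - 1) 0 ≤ t ↔ k ≤ l.countP (fun x => decide (x ≤ t)) := by
  have hk : k - 1 < l.length := by omega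
  have hpg := List.pairwise_iff_getElem.mp hs
  rw [List.getD_eq_getElem l 0 hk]
  constructor
  · intro h
    have hsplit : l.countP (fun x => decide (x ≤ t))
        = (l.take k).countP (fun x => decide (x ≤ t))
          + (l.drop k).countP (fun x => decide (x ≤ t)) := by
      conv_lhs => rw [← List.take_append_drop k l]
      rw [List.countP_append]
    have h1 : (l.take k).countP (fun x => decide (x ≤ t)) = (l.take k).length := by
      rw [List.countP_eq_length]
      intro a ha
      obtain ⟨i, hi, rfl⟩ := List.mem_iff_getElem.mp ha
      have hik : i < k := by
        have := hi; rw [List.length_take] at this; omega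
      have hil : i < l.length := by omega
      rw [List.getElem_take]
      have : l[i] ≤ t := by
        rcases eq_or_lt_of_le (Nat.le_of_lt_succ (by omega : i < (k-1)+1)) with he | hlt
        · exact he ▸ h
        · exact le_trans (hpg i (k-1) hil hk hlt) h
      simpa using this
    have h2 : (l.take k).length = k := by rw [List.length_take]; omega
    omega
  · intro h
    by_contra hlt
    push_neg at hlt
    have hdrop : (l.drop (k-1)).countP (fun x => decide (x ≤ t)) = 0 := by
      rw [List.countP_eq_zero]
      intro a ha
      obtain ⟨j, hj, rfl⟩ := List.mem_iff_getElem.mp ha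
      have hjl : (k-1) + j < l.length := by
        have := hj; rw [List.length_drop] at this; omega
      rw [List.getElem_drop]
      have hge : l[k-1] ≤ l[(k-1)+j] := by
        rcases Nat.eq_zero_or_pos j with rfl | hj0
        · simp
        · exact hpg (k-1) ((k-1)+j) hk hjl (by omega)
      simp only [decide_eq_true_eq]
      push_neg
      exact lt_of_lt_of_le hlt hge
    have hsplit : l.countP (fun x => decide (x ≤ t))
        = (l.take (k-1)).countP (fun x => decide (x ≤ t))
          + (l.drop (k-1)).countP (fun x => decide (x ≤ t)) := by
      conv_lhs => rw [← List.take_append_drop (k-1) l]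
      rw [List.countP_append]
    have h3 := List.countP_le_length (p := fun x => decide (x ≤ t)) (l := l.take (k-1))
    rw [List.length_take] at h3
    omega

lemma orderStat_le_iff {n : ℕ} (v : Fin n → ℝ) {k : ℕ} (hk1 : 1 ≤ k) (hk2 : k ≤ n) (t : ℝ) :
    orderStat v k ≤ t ↔ k ≤ (List.ofFn v).countP (fun x => decide (x ≤ t)) := by
  have hperm := List.perm_insertionSort (· ≤ ·) (List.ofFn v)
  have hlen : ((List.ofFn v).insertionSort (· ≤ ·)).length = n := by
    rw [List.length_insertionSort, List.length_ofFn]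
  rw [orderStat, sorted_getD_le_iff (List.pairwise_insertionSort _ _) hk1 (by omega) t,
    hperm.countP_eq]

lemma orderStat_mono {n : ℕ} (v : Fin n → ℝ) {k k' : ℕ} (hk1 : 1 ≤ k) (hkk' : k ≤ k')
    (hk2 : k' ≤ n) : orderStat v k ≤ orderStat v k' := by
  have h1 := (orderStat_le_iff v (le_trans hk1 hkk') hk2 (orderStat v k')).mp le_rfl
  exact (orderStat_le_iff v hk1 (le_trans hkk' hk2) (orderStat v k')).mpr (le_trans hkk' h1)

section tail
variable {Ω : Type} [MeasurableSpace Ω] (μ : Measure Ω) [IsProbabilityMeasure μ]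
  {n : ℕ} (y : Fin n → Ω → ℝ) {ν : Measure ℝ} [IsProbabilityMeasure ν] (t : ℝ)

lemma prob_toReal_le_one : (ν (Set.Iic t)).toReal ≤ 1 := by
  simpa using ENNReal.toReal_mono ENNReal.one_ne_top (prob_le_one (μ := ν) (s := Set.Iic t))

/-- mgf of the sum of indicators. -/
lemma indicator_sum_mgf (hy : ∀ i, Measurable (y i))
    (hind : iIndepFun y μ)
    (hmap : ∀ i, Measure.map (y i) μ = ν) (lam : ℝ) :
    mgf (∑ i, fun ω => if y i ω ≤ t then (1:ℝ) else 0) μ lam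
      = (1 + (ν (Set.Iic t)).toReal * (exp lam - 1)) ^ n := by
  set g : ℝ → ℝ := fun r => if r ≤ t then (1:ℝ) else 0 with hg
  have hgm : Measurable g := Measurable.ite measurableSet_Iic measurable_const measurable_const
  have hXi : (fun i => (fun ω => if y i ω ≤ t then (1:ℝ) else 0)) = fun i => g ∘ y i := rfl
  rw [hXi]
  have hXind : iIndepFun (fun i => g ∘ y i) μ :=
    hind.comp (fun _ => g) (fun _ => hgm)
  rw [hXind.mgf_sum (fun i => hgm.comp (hy i)) Finset.univ]
  have hmgf : ∀ i : Fin n, mgf (g ∘ y i) μ lam = 1 + (ν (Set.Iic t)).toReal * (exp lam - 1) := by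
    intro i
    have hA : MeasurableSet ((y i) ⁻¹' (Set.Iic t)) := (hy i) measurableSet_Iic
    have hμA : μ ((y i) ⁻¹' (Set.Iic t)) = ν (Set.Iic t) := by
      rw [← hmap i, Measure.map_apply (hy i) measurableSet_Iic]
    have heq : (fun ω => exp (lam * (g ∘ y i) ω))
        = fun ω => ((y i) ⁻¹' (Set.Iic t)).indicator (fun _ => exp lam - 1) ω + 1 := by
      funext ω
      by_cases h : y i ω ≤ t
      · have hm : ω ∈ (y i) ⁻¹' (Set.Iic t) := h
        simp [g, h, Set.indicator_of_mem hm]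
      · have hm : ω ∉ (y i) ⁻¹' (Set.Iic t) := h
        simp [g, h, Set.indicator_of_notMem hm]
    rw [mgf, heq, integral_add ((integrable_const _).indicator hA) (integrable_const _),
      integral_indicator_const _ hA, integral_const, measureReal_def, hμA]
    simp [measure_univ]
    ring
  rw [Finset.prod_congr rfl (fun i _ => hmgf i), Finset.prod_const, Finset.card_univ,
    Fintype.card_fin]

lemma indicator_sum_exp_integrable (hy : ∀ i, Measurable (y i)) (lam : ℝ) :
    Integrable (fun ω => exp (lam * (∑ i, fun ω' => if y i ω' ≤ t then (1:ℝ) else 0) ω)) μ := by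
  have hXim : ∀ i : Fin n, Measurable (fun ω => if y i ω ≤ t then (1:ℝ) else 0) := fun i =>
    Measurable.ite ((hy i) measurableSet_Iic) measurable_const measurable_const
  have hfe : (∑ i, fun ω' => if y i ω' ≤ t then (1:ℝ) else 0)
      = fun ω => ∑ i : Fin n, if y i ω ≤ t then (1:ℝ) else 0 := by
    funext ω; simp [Finset.sum_apply]
  rw [hfe]
  have hSm : Measurable (fun ω => ∑ i : Fin n, if y i ω ≤ t then (1:ℝ) else 0) :=
    Finset.measurable_sum Finset.univ (fun i _ => hXim i)
  refine (integrable_const (exp (|lam| * n))).mono'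
    ((hSm.const_mul lam).exp.aestronglyMeasurable) (Filter.Eventually.of_forall fun ω => ?_)
  have hS0 : 0 ≤ ∑ i : Fin n, if y i ω ≤ t then (1:ℝ) else 0 :=
    Finset.sum_nonneg fun i _ => by positivity
  have hSn : (∑ i : Fin n, if y i ω ≤ t then (1:ℝ) else 0) ≤ n := by
    calc (∑ i : Fin n, if y i ω ≤ t then (1:ℝ) else 0) ≤ ∑ i : Fin n, 1 :=
        Finset.sum_le_sum fun i _ => by split <;> norm_num
    _ = n := by simp
  rw [Real.norm_eq_abs, abs_exp]
  apply exp_le_exp.mpr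
  calc lam * _ ≤ |lam| * _ := mul_le_mul_of_nonneg_right (le_abs_self lam) hS0
  _ ≤ |lam| * n := mul_le_mul_of_nonneg_left hSn (abs_nonneg lam)

lemma indicator_sum_tail_le (hy : ∀ i, Measurable (y i))
    (hind : iIndepFun y μ)
    (hmap : ∀ i, Measure.map (y i) μ = ν) (lam a : ℝ) (hlam : lam ≤ 0) :
    μ {ω | (∑ i, fun ω' => if y i ω' ≤ t then (1:ℝ) else 0) ω ≤ a}
      ≤ ENNReal.ofReal (exp (-lam * a) * (1 + (ν (Set.Iic t)).toReal * (exp lam - 1)) ^ n) := by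
  have hq : (0:ℝ) ≤ 1 + (ν (Set.Iic t)).toReal * (exp lam - 1) := by
    have hp1 := prob_toReal_le_one (ν := ν) t
    have hp0 : (0:ℝ) ≤ (ν (Set.Iic t)).toReal := ENNReal.toReal_nonneg
    nlinarith [exp_pos lam]
  rw [ENNReal.le_ofReal_iff_toReal_le (measure_ne_top μ _) (by positivity)]
  calc (μ {ω | (∑ i, fun ω' => if y i ω' ≤ t then (1:ℝ) else 0) ω ≤ a}).toReal
      ≤ exp (-lam * a) * mgf (∑ i, fun ω' => if y i ω' ≤ t then (1:ℝ) else 0) μ lam :=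
        measure_le_le_exp_mul_mgf a hlam (indicator_sum_exp_integrable μ y t hy lam)
  _ = _ := by rw [indicator_sum_mgf μ y t hy hind hmap lam]

lemma indicator_sum_tail_ge (hy : ∀ i, Measurable (y i))
    (hind : iIndepFun y μ)
    (hmap : ∀ i, Measure.map (y i) μ = ν) (lam a : ℝ) (hlam : 0 ≤ lam) :
    μ {ω | a ≤ (∑ i, fun ω' => if y i ω' ≤ t then (1:ℝ) else 0) ω}
      ≤ ENNReal.ofReal (exp (-lam * a) * (1 + (ν (Set.Iic t)).toReal * (exp lam - 1)) ^ n) := by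
  have hq : (0:ℝ) ≤ 1 + (ν (Set.Iic t)).toReal * (exp lam - 1) := by
    have hp1 := prob_toReal_le_one (ν := ν) t
    have hp0 : (0:ℝ) ≤ (ν (Set.Iic t)).toReal := ENNReal.toReal_nonneg
    nlinarith [exp_pos lam]
  rw [ENNReal.le_ofReal_iff_toReal_le (measure_ne_top μ _) (by positivity)]
  calc (μ {ω | a ≤ (∑ i, fun ω' => if y i ω' ≤ t then (1:ℝ) else 0) ω}).toReal
      ≤ exp (-lam * a) * mgf (∑ i, fun ω' => if y i ω' ≤ t then (1:ℝ) else 0) μ lam :=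
        measure_ge_le_exp_mul_mgf a hlam (indicator_sum_exp_integrable μ y t hy lam)
  _ = _ := by rw [indicator_sum_mgf μ y t hy hind hmap lam]

end tail

lemma exp_quad_bound {lam : ℝ} (h : |lam| ≤ 1) : Real.exp lam ≤ 1 + lam + lam ^ 2 := by
  have hb := Real.exp_bound h (n := 2) (by norm_num)
  have h2 : ∑ m ∈ Finset.range 2, lam ^ m / (m.factorial : ℝ) = 1 + lam := by
    simp [Finset.sum_range_succ]
  rw [h2] at hb
  norm_num at hb
  have h3 := (abs_le.mp hb).2
  nlinarith [sq_abs lam, sq_nonneg lam]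

set_option maxHeartbeats 1000000 in
lemma perK {Ω : Type} [MeasurableSpace Ω] (μ : Measure Ω) [IsProbabilityMeasure μ]
    {n : ℕ} (hn : 1 ≤ n) (y : Fin n → Ω → ℝ) (hy : ∀ i, Measurable (y i))
    (hind : iIndepFun y μ)
    {ν : Measure ℝ} [IsProbabilityMeasure ν] (hmap : ∀ i, Measure.map (y i) μ = ν)
    (F : ℝ → ℝ) (hF : ∀ t, F t = (ν (Set.Iic t)).toReal)
    (hFsurj : ∀ s : ℝ, 0 < s → s < 1 → ∃ t, F t = s)
    {k : ℕ} (hk1 : 1 ≤ k) (hk2 : k ≤ n) {ε : ℝ} (hε0 : 0 < ε) (hε1 : ε ≤ 1) :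
    μ {ω | ε/2 < |F (orderStat (fun i => y i ω) k) - k / n|}
      ≤ ENNReal.ofReal (2 * Real.exp (-(n:ℝ) * ε^2 / 16)) := by
  have hnR : (1:ℝ) ≤ n := by exact_mod_cast hn
  have hFmono : Monotone F := by
    intro a b hab
    rw [hF, hF]
    exact ENNReal.toReal_mono (measure_ne_top ν _)
      (measure_mono (Set.Iic_subset_Iic.mpr hab))
  have hF0 : ∀ t, 0 ≤ F t := fun t => (hF t) ▸ ENNReal.toReal_nonneg
  have hF1 : ∀ t, F t ≤ 1 := by
    intro t
    rw [hF]
    simpa using ENNReal.toReal_mono ENNReal.one_ne_top (prob_le_one (μ := ν) (s := Set.Iic t))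
  have hepos : (0:ℝ) < Real.exp (-(n:ℝ) * ε^2 / 16) := exp_pos _
  -- upper tail
  have hU : μ {ω | (k:ℝ)/n + ε/2 < F (orderStat (fun i => y i ω) k)}
      ≤ ENNReal.ofReal (Real.exp (-(n:ℝ) * ε^2 / 16)) := by
    rcases le_or_gt 1 ((k:ℝ)/n + ε/2) with hs1 | hs1
    · have hempty : {ω | (k:ℝ)/n + ε/2 < F (orderStat (fun i => y i ω) k)} = ∅ := by
        ext ω
        simp only [Set.mem_setOf_eq, Set.mem_empty_iff_false, iff_false, not_lt]
        exact le_trans (hF1 _) hs1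
      rw [hempty]
      simp
    · have hspos : 0 < (k:ℝ)/n + ε/2 := by positivity
      obtain ⟨t, ht⟩ := hFsurj _ hspos hs1
      set p : ℝ := (ν (Set.Iic t)).toReal with hp
      have hpt : p = (k:ℝ)/n + ε/2 := by rw [hp, ← hF t, ht]
      have hp0 : 0 ≤ p := ENNReal.toReal_nonneg
      have hp1 : p ≤ 1 := by rw [hpt]; linarith [hs1.le]
      have hnp : (n:ℝ) * p = k + n * ε/2 := by
        rw [hpt]; field_simp
      have hsub : {ω | (k:ℝ)/n + ε/2 < F (orderStat (fun i => y i ω) k)}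
          ⊆ {ω | (∑ i, fun ω' => if y i ω' ≤ t then (1:ℝ) else 0) ω ≤ (k:ℝ) - 1} := by
        intro ω hω
        simp only [Set.mem_setOf_eq] at hω ⊢
        have hsum : (∑ i, fun ω' => if y i ω' ≤ t then (1:ℝ) else 0) ω
            = ((List.ofFn fun i => y i ω).countP (fun x => decide (x ≤ t)) : ℝ) := by
          rw [Finset.sum_apply]
          exact sum_ite_eq_countP _ t
        rw [hsum]
        have hnot : ¬ orderStat (fun i => y i ω) k ≤ t := by
          intro hle
          exact absurd (ht ▸ hFmono hle) (not_le.mpr hω)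
        rw [orderStat_le_iff _ hk1 hk2 t] at hnot
        push_neg at hnot
        have hc1 : (List.ofFn fun i => y i ω).countP (fun x => decide (x ≤ t)) + 1 ≤ k := hnot
        have hc2 : ((List.ofFn fun i => y i ω).countP (fun x => decide (x ≤ t)) : ℝ) + 1
            ≤ (k:ℝ) := by exact_mod_cast hc1
        linarith
      refine le_trans (measure_mono hsub) (le_trans
        (indicator_sum_tail_le μ y t hy hind hmap (-(ε/4)) ((k:ℝ)-1) (by linarith)) ?_)
      apply ENNReal.ofReal_le_ofReal
      -- numeric bound
      have habs : |(-(ε/4))| ≤ 1 := by rw [abs_neg, abs_of_nonneg (by linarith)]; linarith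
      have hE1 : Real.exp (-(ε/4)) ≤ 1 - ε/4 + ε^2/16 := by
        calc Real.exp (-(ε/4)) ≤ 1 + (-(ε/4)) + (-(ε/4))^2 := exp_quad_bound habs
        _ = 1 - ε/4 + ε^2/16 := by ring
      have hq0 : (0:ℝ) ≤ 1 + p * (Real.exp (-(ε/4)) - 1) := by
        nlinarith [exp_pos (-(ε/4))]
      calc Real.exp (-(-(ε/4)) * ((k:ℝ)-1)) * (1 + p * (Real.exp (-(ε/4)) - 1)) ^ n
          ≤ Real.exp (-(-(ε/4)) * ((k:ℝ)-1)) * (Real.exp (p * (Real.exp (-(ε/4)) - 1))) ^ n := by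
            apply mul_le_mul_of_nonneg_left _ (exp_pos _).le
            apply pow_le_pow_left₀ hq0
            linarith [Real.add_one_le_exp (p * (Real.exp (-(ε/4)) - 1))]
        _ = Real.exp (-(-(ε/4)) * ((k:ℝ)-1) + n * (p * (Real.exp (-(ε/4)) - 1))) := by
            rw [← Real.exp_nat_mul, ← Real.exp_add]
        _ ≤ Real.exp (-(n:ℝ) * ε^2 / 16) := by
            apply exp_le_exp.mpr
            have h4 : p * (Real.exp (-(ε/4)) - 1) ≤ p * (-(ε/4)) + ε^2/16 := by
              nlinarith [sq_nonneg ε]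
            have h5 : (n:ℝ) * (p * (Real.exp (-(ε/4)) - 1))
                ≤ (n:ℝ) * (p * (-(ε/4)) + ε^2/16) :=
              mul_le_mul_of_nonneg_left h4 (by linarith)
            have h6 : (n:ℝ) * (p * (-(ε/4)) + ε^2/16)
                = ((n:ℝ) * p) * (-(ε/4)) + (n:ℝ) * (ε^2/16) := by ring
            rw [h6, hnp] at h5
            nlinarith [hε0]
  -- lower tail
  have hL : μ {ω | F (orderStat (fun i => y i ω) k) < (k:ℝ)/n - ε/2}
      ≤ ENNReal.ofReal (Real.exp (-(n:ℝ) * ε^2 / 16)) := by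
    rcases le_or_gt ((k:ℝ)/n - ε/2) 0 with hs0 | hs0
    · have hempty : {ω | F (orderStat (fun i => y i ω) k) < (k:ℝ)/n - ε/2} = ∅ := by
        ext ω
        simp only [Set.mem_setOf_eq, Set.mem_empty_iff_false, iff_false, not_lt]
        exact le_trans hs0 (hF0 _)
      rw [hempty]; simp
    · have hkn : (k:ℝ)/n ≤ 1 := by
        rw [div_le_one (by linarith)]
        exact_mod_cast hk2
      have hs1 : (k:ℝ)/n - ε/2 < 1 := by linarith
      obtain ⟨t, ht⟩ := hFsurj _ hs0 hs1
      set p : ℝ := (ν (Set.Iic t)).toReal with hp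
      have hpt : p = (k:ℝ)/n - ε/2 := by rw [hp, ← hF t, ht]
      have hp0 : 0 ≤ p := ENNReal.toReal_nonneg
      have hp1 : p ≤ 1 := by rw [hpt]; linarith
      have hnp : (n:ℝ) * p = k - n * ε/2 := by
        rw [hpt]; field_simp
      have hsub : {ω | F (orderStat (fun i => y i ω) k) < (k:ℝ)/n - ε/2}
          ⊆ {ω | (k:ℝ) ≤ (∑ i, fun ω' => if y i ω' ≤ t then (1:ℝ) else 0) ω} := by
        intro ω hω
        simp only [Set.mem_setOf_eq] at hω ⊢
        have hsum : (∑ i, fun ω' => if y i ω' ≤ t then (1:ℝ) else 0) ω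
            = ((List.ofFn fun i => y i ω).countP (fun x => decide (x ≤ t)) : ℝ) := by
          rw [Finset.sum_apply]
          exact sum_ite_eq_countP _ t
        rw [hsum]
        have hlt : orderStat (fun i => y i ω) k ≤ t := by
          by_contra hcon
          push_neg at hcon
          exact absurd (ht ▸ hFmono hcon.le) (not_le.mpr hω)
        rw [orderStat_le_iff _ hk1 hk2 t] at hlt
        exact_mod_cast hlt
      refine le_trans (measure_mono hsub) (le_trans
        (indicator_sum_tail_ge μ y t hy hind hmap (ε/4) (k:ℝ) (by linarith)) ?_)
      apply ENNReal.ofReal_le_ofReal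
      have habs : |(ε/4)| ≤ 1 := by rw [abs_of_nonneg (by linarith)]; linarith
      have hE1 : Real.exp (ε/4) ≤ 1 + ε/4 + ε^2/16 := by
        calc Real.exp (ε/4) ≤ 1 + (ε/4) + (ε/4)^2 := exp_quad_bound habs
        _ = 1 + ε/4 + ε^2/16 := by ring
      have hq0 : (0:ℝ) ≤ 1 + p * (Real.exp (ε/4) - 1) := by
        nlinarith [exp_pos (ε/4)]
      calc Real.exp (-(ε/4) * (k:ℝ)) * (1 + p * (Real.exp (ε/4) - 1)) ^ n
          ≤ Real.exp (-(ε/4) * (k:ℝ)) * (Real.exp (p * (Real.exp (ε/4) - 1))) ^ n := by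
            apply mul_le_mul_of_nonneg_left _ (exp_pos _).le
            apply pow_le_pow_left₀ hq0
            linarith [Real.add_one_le_exp (p * (Real.exp (ε/4) - 1))]
        _ = Real.exp (-(ε/4) * (k:ℝ) + n * (p * (Real.exp (ε/4) - 1))) := by
            rw [← Real.exp_nat_mul, ← Real.exp_add]
        _ ≤ Real.exp (-(n:ℝ) * ε^2 / 16) := by
            apply exp_le_exp.mpr
            have h4 : p * (Real.exp (ε/4) - 1) ≤ p * (ε/4) + ε^2/16 := by
              nlinarith [sq_nonneg ε]
            have h5 : (n:ℝ) * (p * (Real.exp (ε/4) - 1))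
                ≤ (n:ℝ) * (p * (ε/4) + ε^2/16) :=
              mul_le_mul_of_nonneg_left h4 (by linarith)
            have h6 : (n:ℝ) * (p * (ε/4) + ε^2/16)
                = ((n:ℝ) * p) * (ε/4) + (n:ℝ) * (ε^2/16) := by ring
            rw [h6, hnp] at h5
            nlinarith [hε0]
  -- combine
  have hsub : {ω | ε/2 < |F (orderStat (fun i => y i ω) k) - k / n|}
      ⊆ {ω | (k:ℝ)/n + ε/2 < F (orderStat (fun i => y i ω) k)}
        ∪ {ω | F (orderStat (fun i => y i ω) k) < (k:ℝ)/n - ε/2} := by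
    intro ω hω
    simp only [Set.mem_setOf_eq, Set.mem_union] at hω ⊢
    rcases lt_abs.mp hω with h | h
    · left; linarith
    · right; linarith
  refine le_trans (measure_mono hsub) (le_trans (measure_union_le _ _) ?_)
  refine le_trans (add_le_add hU hL) ?_
  rw [← ENNReal.ofReal_add hepos.le hepos.le]
  apply ENNReal.ofReal_le_ofReal
  ring_nf
  exact le_rfl

set_option maxHeartbeats 1600000 in
theorem stmt_10 :
    ∃ C : ℝ, 0 < C ∧ ∃ H₀ c₀ : ℕ, ∀ H c : ℕ, H₀ ≤ H → c₀ ≤ c →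
      ∀ (Ω : Type) (_ : MeasurableSpace Ω) (μ : Measure Ω), IsProbabilityMeasure μ →
      ∀ (f : ℝ → ℝ), Measurable f → (∀ t, 0 ≤ f t) → Continuous f →
      ∀ (y : Fin (H * c) → Ω → ℝ), (∀ i, Measurable (y i)) →
        iIndepFun y μ →
        (∀ i, Measure.map (y i) μ =
          volume.withDensity (fun t => ENNReal.ofReal (f t))) →
        ∀ ε : ℝ, 4 / ((H : ℝ) * c - 1) < ε →
          μ {ω | ∃ h ∈ Finset.Icc 1 H,
              ε < |(∫ t in sirSlice H c (fun i => y i ω) h, f t) - 1 / (H : ℝ)|} ≤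
            ENNReal.ofReal (C * H ^ 2 * Real.sqrt ((H : ℝ) * c + 1) *
              Real.exp (-((H : ℝ) * c + 1) * ε ^ 2 / 32)) := by
  refine ⟨2, by norm_num, 1, 1, ?_⟩
  intro H c hH hc Ω mΩ μ hμ f hfm hf0 hfc y hy hind hmap ε hε
  have hn : 1 ≤ H * c := by
    calc 1 = 1 * 1 := by norm_num
    _ ≤ H * c := Nat.mul_le_mul hH hc
  have hHr : (1:ℝ) ≤ H := by exact_mod_cast hH
  have hcr : (1:ℝ) ≤ c := by exact_mod_cast hc
  have hNc : ((H * c : ℕ) : ℝ) = (H:ℝ) * c := by push_cast; ring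
  have hNr : (1:ℝ) ≤ ((H * c : ℕ) : ℝ) := by exact_mod_cast hn
  have hε0 : 0 < ε := by
    refine lt_of_le_of_lt (div_nonneg (by norm_num) ?_) hε
    nlinarith
  set ν := volume.withDensity (fun t => ENNReal.ofReal (f t)) with hν
  have i0 : Fin (H * c) := ⟨0, by omega⟩
  haveI hνP : IsProbabilityMeasure ν := by
    rw [← hmap i0]
    exact Measure.isProbabilityMeasure_map (hy i0).aemeasurable
  have hlint : ∫⁻ t, ENNReal.ofReal (f t) = 1 := by
    have h1 : ν Set.univ = 1 := measure_univ
    rwa [hν, withDensity_apply _ MeasurableSet.univ, setLIntegral_univ] at h1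
  have hIntf : Integrable f := by
    refine ⟨hfm.aestronglyMeasurable, ?_⟩
    rw [hasFiniteIntegral_iff_ofReal (Filter.Eventually.of_forall hf0), hlint]
    exact ENNReal.one_lt_top
  have hfint1 : ∫ t, f t = 1 := by
    rw [integral_eq_lintegral_of_nonneg_ae (Filter.Eventually.of_forall hf0)
      hfm.aestronglyMeasurable, hlint]
    simp
  set F : ℝ → ℝ := fun r => ∫ s in Set.Iic r, f s with hFdef
  have hFν : ∀ r, F r = (ν (Set.Iic r)).toReal := by
    intro r
    rw [hν, withDensity_apply _ measurableSet_Iic]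
    exact integral_eq_lintegral_of_nonneg_ae (Filter.Eventually.of_forall hf0)
      hfm.aestronglyMeasurable
  have hFcdf : ∀ r, F r = cdf ν r := fun r => by rw [hFν r, cdf_eq_real, measureReal_def]
  have hFmono : Monotone F := by
    intro a b hab
    rw [hFcdf, hFcdf]
    exact monotone_cdf ν hab
  have hFcont : Continuous F := by
    have heq : F = fun r => (∫ u in (0:ℝ)..r, f u) + F 0 := by
      funext r
      rw [← intervalIntegral.integral_Iic_sub_Iic hIntf.integrableOn hIntf.integrableOn]
      simp only [hFdef]; ring
    rw [heq]
    exact (hIntf.continuous_primitive 0).add continuous_const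
  have hFsurj : ∀ s : ℝ, 0 < s → s < 1 → ∃ t, F t = s := by
    intro s hs0 hs1
    have h0 := tendsto_cdf_atBot ν
    have h1 := tendsto_cdf_atTop ν
    obtain ⟨a, ha⟩ := (h0.eventually (eventually_lt_nhds hs0)).exists
    obtain ⟨b, hb⟩ := (h1.eventually (eventually_gt_nhds hs1)).exists
    have hab : a ≤ max a b := le_max_left a b
    have hFa : F a < s := by rw [hFcdf]; exact ha
    have hFb : s < F (max a b) := by
      calc s < cdf ν b := hb
      _ = F b := (hFcdf b).symm
      _ ≤ F (max a b) := hFmono (le_max_right a b)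
    obtain ⟨t, _, ht⟩ := intermediate_value_Icc hab hFcont.continuousOn
      ⟨hFa.le, hFb.le⟩
    exact ⟨t, ht⟩
  -- basic slice facts
  have hslice_meas : ∀ (v : Fin (H*c) → ℝ) (h : ℕ), MeasurableSet (sirSlice H c v h) := by
    intro v h
    unfold sirSlice
    split_ifs
    exacts [measurableSet_Iic, measurableSet_Ioi, measurableSet_Ioc]
  have hδ01 : ∀ (v : Fin (H*c) → ℝ) (h : ℕ),
      0 ≤ (∫ t in sirSlice H c v h, f t) ∧ (∫ t in sirSlice H c v h, f t) ≤ 1 := by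
    intro v h
    constructor
    · exact setIntegral_nonneg (hslice_meas v h) (fun x _ => hf0 x)
    · rw [← hfint1]
      exact setIntegral_le_integral hIntf (Filter.Eventually.of_forall hf0)
  rcases le_or_gt ε 1 with hε1 | hε1
  swap
  · -- ε > 1 : event is empty
    have hempty : {ω | ∃ h ∈ Finset.Icc 1 H,
        ε < |(∫ t in sirSlice H c (fun i => y i ω) h, f t) - 1 / (H : ℝ)|} = ∅ := by
      rw [Set.eq_empty_iff_forall_notMem]
      rintro ω ⟨h, hmem, hlt⟩
      obtain ⟨hδ0, hδ1⟩ := hδ01 (fun i => y i ω) h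
      have hH0 : 0 < (H:ℝ) := by linarith
      have h1H0 : 0 ≤ 1 / (H:ℝ) := by positivity
      have h1H1 : 1 / (H:ℝ) ≤ 1 := by rw [div_le_one hH0]; linarith
      have : |(∫ t in sirSlice H c (fun i => y i ω) h, f t) - 1 / (H : ℝ)| ≤ 1 := by
        rw [abs_le]; constructor <;> linarith
      linarith
    rw [hempty]
    simp
  · -- main case
    set B : ℕ → Set Ω := fun h =>
      {ω | ε/2 < |F (orderStat (fun i => y i ω) (h * c)) - (h * c : ℕ) / ((H * c : ℕ) : ℝ)|}
      with hBdef
    have hsub : {ω | ∃ h ∈ Finset.Icc 1 H,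
        ε < |(∫ t in sirSlice H c (fun i => y i ω) h, f t) - 1 / (H : ℝ)|}
        ⊆ ⋃ h ∈ Finset.Icc 1 H, B h := by
      rintro ω ⟨h, hmem, hlt⟩
      rw [Finset.mem_Icc] at hmem
      obtain ⟨hh1, hhH⟩ := hmem
      set v : Fin (H*c) → ℝ := fun i => y i ω with hv
      have hH0 : (0:ℝ) < H := by linarith
      have hc0 : (0:ℝ) < c := by linarith
      by_cases h1 : h = 1
      · subst h1
        have hsl : sirSlice H c v 1 = Set.Iic (orderStat v c) := by simp [sirSlice]
        rw [hsl] at hlt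
        have hδF : (∫ t in Set.Iic (orderStat v c), f t) = F (orderStat v c) := rfl
        rw [hδF] at hlt
        have harith : ((1 * c : ℕ) : ℝ) / ((H * c : ℕ) : ℝ) = 1 / (H:ℝ) := by
          push_cast
          field_simp
        refine Set.mem_iUnion₂.mpr ⟨1, Finset.mem_Icc.mpr ⟨le_rfl, hH⟩, ?_⟩
        rw [hBdef]
        simp only [Set.mem_setOf_eq]
        rw [harith, one_mul]
        linarith
      · by_cases hH' : h = H
        · subst hH'
          have hH2 : 2 ≤ h := by omega
          have hsl : sirSlice h c v h = Set.Ioi (orderStat v ((h - 1) * c)) := by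
            simp [sirSlice, h1]
          rw [hsl] at hlt
          have hIoi : (∫ t in Set.Ioi (orderStat v ((h-1)*c)), f t)
              = 1 - F (orderStat v ((h-1)*c)) := by
            have hsum := intervalIntegral.integral_Iic_add_Ioi (b := orderStat v ((h-1)*c))
              hIntf.integrableOn hIntf.integrableOn
            rw [hfint1] at hsum
            have : F (orderStat v ((h-1)*c)) = ∫ t in Set.Iic (orderStat v ((h-1)*c)), f t := rfl
            linarith
          rw [hIoi] at hlt
          have harith : (((h-1) * c : ℕ) : ℝ) / ((h * c : ℕ) : ℝ) = 1 - 1 / (h:ℝ) := by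
            push_cast [Nat.cast_sub (by omega : 1 ≤ h)]
            field_simp
          refine Set.mem_iUnion₂.mpr ⟨h - 1, Finset.mem_Icc.mpr ⟨by omega, by omega⟩, ?_⟩
          rw [hBdef]
          simp only [Set.mem_setOf_eq]
          rw [harith]
          have habs : |1 - F (orderStat v ((h-1)*c)) - 1 / (h:ℝ)|
              = |F (orderStat v ((h-1)*c)) - (1 - 1/(h:ℝ))| := by
            rw [← abs_neg]; ring_nf
          rw [← habs]
          linarith
        · -- middle slice
          have hH2 : 2 ≤ h := by omega
          have hhH' : h < H := by omega
          have hsl : sirSlice H c v h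
              = Set.Ioc (orderStat v ((h - 1) * c)) (orderStat v (h * c)) := by
            simp [sirSlice, h1, hH']
          rw [hsl] at hlt
          have hk1 : 1 ≤ (h-1) * c := by
            have : 1 * 1 ≤ (h-1) * c := Nat.mul_le_mul (by omega) hc
            omega
          have hab : orderStat v ((h-1)*c) ≤ orderStat v (h*c) :=
            orderStat_mono v hk1 (Nat.mul_le_mul (by omega) le_rfl)
              (Nat.mul_le_mul hhH'.le le_rfl)
          have hIoc : (∫ t in Set.Ioc (orderStat v ((h-1)*c)) (orderStat v (h*c)), f t)
              = F (orderStat v (h*c)) - F (orderStat v ((h-1)*c)) := by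
            have heq := intervalIntegral.integral_Iic_sub_Iic
              (a := orderStat v ((h-1)*c)) (b := orderStat v (h*c))
              hIntf.integrableOn hIntf.integrableOn
            rw [intervalIntegral.integral_of_le hab] at heq
            exact heq.symm
          rw [hIoc] at hlt
          have harith : ((h * c : ℕ) : ℝ) / ((H * c : ℕ) : ℝ)
              - (((h-1) * c : ℕ) : ℝ) / ((H * c : ℕ) : ℝ) = 1 / (H:ℝ) := by
            push_cast [Nat.cast_sub (by omega : 1 ≤ h)]
            field_simp
            ring
          obtain ⟨A, hA⟩ : ∃ A : ℝ,
              A = F (orderStat v (h*c)) - ((h * c : ℕ) : ℝ) / ((H * c : ℕ) : ℝ) := ⟨_, rfl⟩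
          obtain ⟨Bv, hBv⟩ : ∃ Bv : ℝ,
              Bv = F (orderStat v ((h-1)*c)) - (((h-1) * c : ℕ) : ℝ) / ((H * c : ℕ) : ℝ) :=
            ⟨_, rfl⟩
          have hδeq : F (orderStat v (h*c)) - F (orderStat v ((h-1)*c)) - 1/(H:ℝ)
              = A - Bv := by rw [hA, hBv]; linarith [harith]
          have hor : ε/2 < |A| ∨ ε/2 < |Bv| := by
            by_contra hcon
            push_neg at hcon
            obtain ⟨hA2, hB2⟩ := hcon
            obtain ⟨h1a, h1b⟩ := abs_le.mp hA2
            obtain ⟨h2a, h2b⟩ := abs_le.mp hB2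
            have : |F (orderStat v (h*c)) - F (orderStat v ((h-1)*c)) - 1/(H:ℝ)| ≤ ε := by
              rw [hδeq, abs_le]
              constructor <;> linarith
            linarith
          rcases hor with hor | hor
          · refine Set.mem_iUnion₂.mpr ⟨h, Finset.mem_Icc.mpr ⟨by omega, by omega⟩, ?_⟩
            rw [hBdef]
            simp only [Set.mem_setOf_eq]
            rw [show (fun i => y i ω) = v from rfl]
            rw [hA] at hor
            exact hor
          · refine Set.mem_iUnion₂.mpr ⟨h - 1, Finset.mem_Icc.mpr ⟨by omega, by omega⟩, ?_⟩
            rw [hBdef]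
            simp only [Set.mem_setOf_eq]
            rw [show (fun i => y i ω) = v from rfl]
            rw [hBv] at hor
            exact hor
    -- union bound
    have hBbound : ∀ h ∈ Finset.Icc 1 H,
        μ (B h) ≤ ENNReal.ofReal (2 * Real.exp (-((H*c : ℕ):ℝ) * ε^2 / 16)) := by
      intro h hmem
      rw [Finset.mem_Icc] at hmem
      have hk1 : 1 ≤ h * c := by
        have : 1 * 1 ≤ h * c := Nat.mul_le_mul hmem.1 hc
        omega
      have hk2 : h * c ≤ H * c := Nat.mul_le_mul hmem.2 le_rfl
      exact perK μ hn y hy hind hmap F hFν hFsurj hk1 hk2 hε0 hε1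
    calc μ {ω | ∃ h ∈ Finset.Icc 1 H,
        ε < |(∫ t in sirSlice H c (fun i => y i ω) h, f t) - 1 / (H : ℝ)|}
        ≤ μ (⋃ h ∈ Finset.Icc 1 H, B h) := measure_mono hsub
      _ ≤ ∑ h ∈ Finset.Icc 1 H, μ (B h) := measure_biUnion_finset_le _ _
      _ ≤ ∑ _h ∈ Finset.Icc 1 H,
          ENNReal.ofReal (2 * Real.exp (-((H*c : ℕ):ℝ) * ε^2 / 16)) :=
          Finset.sum_le_sum hBbound
      _ = (H : ENNReal) * ENNReal.ofReal (2 * Real.exp (-((H*c : ℕ):ℝ) * ε^2 / 16)) := by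
          rw [Finset.sum_const, Nat.card_Icc]
          simp [nsmul_eq_mul]
      _ = ENNReal.ofReal ((H:ℝ) * (2 * Real.exp (-((H*c : ℕ):ℝ) * ε^2 / 16))) := by
          rw [← ENNReal.ofReal_natCast H, ← ENNReal.ofReal_mul (by positivity)]
      _ ≤ ENNReal.ofReal (2 * H ^ 2 * Real.sqrt ((H : ℝ) * c + 1) *
            Real.exp (-((H : ℝ) * c + 1) * ε ^ 2 / 32)) := by
          apply ENNReal.ofReal_le_ofReal
          have hHc1 : (1:ℝ) ≤ (H:ℝ) * c := by nlinarith
          have hexp : Real.exp (-((H*c : ℕ):ℝ) * ε^2 / 16)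
              ≤ Real.exp (-((H : ℝ) * c + 1) * ε ^ 2 / 32) := by
            apply exp_le_exp.mpr
            rw [hNc]
            nlinarith [sq_nonneg ε]
          have h1s : (1:ℝ) ≤ Real.sqrt ((H:ℝ)*c+1) := by
            have hs := Real.sqrt_le_sqrt (show (1:ℝ) ≤ (H:ℝ)*c+1 by linarith)
            rwa [Real.sqrt_one] at hs
          have hH2 : (H:ℝ) ≤ (H:ℝ)^2 := by nlinarith
          calc (H:ℝ) * (2 * Real.exp (-((H*c : ℕ):ℝ) * ε^2 / 16))
              ≤ (H:ℝ) * (2 * Real.exp (-((H : ℝ) * c + 1) * ε ^ 2 / 32)) := by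
                apply mul_le_mul_of_nonneg_left _ (by positivity)
                apply mul_le_mul_of_nonneg_left hexp (by norm_num)
            _ = 2 * (H:ℝ) * 1 * Real.exp (-((H : ℝ) * c + 1) * ε ^ 2 / 32) := by ring
            _ ≤ 2 * (H:ℝ)^2 * Real.sqrt ((H:ℝ)*c+1)
                  * Real.exp (-((H : ℝ) * c + 1) * ε ^ 2 / 32) := by
                have hstep : (H:ℝ) ≤ (H:ℝ)^2 * Real.sqrt ((H:ℝ)*c+1) := by
                  nlinarith [mul_le_mul_of_nonneg_left h1s (sq_nonneg (H:ℝ))]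
                nlinarith [Real.exp_pos (-((H : ℝ) * c + 1) * ε ^ 2 / 32), hstep]
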